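/- arXiv:1702.01043 — 4 statements merged into one kernel-verified Lean document; each statement's English description precedes it below -/
import Mathlib

section
/- Let A ⊆ ℝⁿ be an open set and u : A → ℝ a locally Lipschitz function. Let I ⊆ ℝ be an open interval containing u(A), and let ψ : I → ℝ be a function of class C² with ψ'(t) > 0 for every t ∈ I. If the composite function v = ψ ∘ u is concave on every convex subset of A, then u is locally semiconcave in A. -/
open Set Metric

lemma lipschitz_on_compact {E : Type*} [NormedAddCommGroup E] {K : Set E} (hK : IsCompact K)
    {u : E → ℝ} (h : ∀ x ∈ K, ∃ (L : NNReal) (t : Set E), t ∈ nhds x ∧ LipschitzOnWith L u t) :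
    ∃ L : ℝ, 0 ≤ L ∧ ∀ x ∈ K, ∀ y ∈ K, |u x - u y| ≤ L * ‖x - y‖ := by
  rcases K.eq_empty_or_nonempty with hKe | hne
  · exact ⟨0, le_refl 0, by simp [hKe]⟩
  choose L t ht hL using h
  obtain ⟨s, hs⟩ := hK.elim_finite_subcover (fun i : K => interior (t i.1 i.2))
    (fun i => isOpen_interior)
    (fun x hx => Set.mem_iUnion.2 ⟨⟨x, hx⟩, mem_interior_iff_mem_nhds.2 (ht x hx)⟩)
  have hs' : K ⊆ ⋃ j : {i : K // i ∈ s}, interior (t j.1.1 j.1.2) := by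
    intro x hx
    rcases Set.mem_iUnion₂.1 (hs hx) with ⟨i, hi, hxi⟩
    exact Set.mem_iUnion.2 ⟨⟨i, hi⟩, hxi⟩
  obtain ⟨δ, hδ, hcov⟩ := lebesgue_number_lemma_of_metric hK (fun j => isOpen_interior) hs'
  set L₀ : NNReal := s.sup (fun i => L i.1 i.2) with hL₀
  have hcont : ContinuousOn u K := fun x hx =>
    (((hL x hx).continuousOn).continuousAt (ht x hx)).continuousWithinAt
  obtain ⟨B, hB⟩ := hK.exists_bound_of_continuousOn hcont
  have hB0 : 0 ≤ B := le_trans (norm_nonneg _) (hB _ hne.some_mem)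
  refine ⟨L₀ + 2 * B / δ, by positivity, ?_⟩
  intro x hx y hy
  by_cases hd : dist x y < δ
  · obtain ⟨j, hj⟩ := hcov x hx
    have hxj : x ∈ t j.1.1 j.1.2 := interior_subset (hj (mem_ball_self hδ))
    have hyj : y ∈ t j.1.1 j.1.2 := interior_subset (hj (by rwa [mem_ball, dist_comm]))
    have hLj : (L j.1.1 j.1.2 : ℝ) ≤ L₀ := by
      exact_mod_cast Finset.le_sup (f := fun i : K => L i.1 i.2) j.2
    have hdd := (hL j.1.1 j.1.2).dist_le_mul x hxj y hyj
    have : |u x - u y| ≤ (L j.1.1 j.1.2 : ℝ) * ‖x - y‖ := by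
      rwa [Real.dist_eq, dist_eq_norm] at hdd
    have hn : (0:ℝ) ≤ ‖x - y‖ := norm_nonneg _
    nlinarith [mul_nonneg (div_nonneg (by linarith : (0:ℝ) ≤ 2*B) hδ.le) hn]
  · push_neg at hd
    have hxy : δ ≤ ‖x - y‖ := by rwa [dist_eq_norm] at hd
    have h1 : |u x - u y| ≤ 2 * B := by
      have := hB x hx; have := hB y hy
      rw [Real.norm_eq_abs] at *
      cases abs_le.1 ‹|u x| ≤ B› with
      | intro h1 h2 => cases abs_le.1 ‹|u y| ≤ B› with
        | intro h3 h4 => rw [abs_le]; constructor <;> linarith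
    have h2 : 2 * B = (2 * B / δ) * δ := by field_simp
    have h3 : (2 * B / δ) * δ ≤ (2 * B / δ) * ‖x - y‖ :=
      mul_le_mul_of_nonneg_left hxy (by positivity)
    nlinarith [mul_nonneg (NNReal.coe_nonneg L₀) (norm_nonneg (x - y))]

/-- A function `u` is locally semiconcave on an open set `A` if for every compact `K ⊆ A`
there is a constant `C ≥ 0` such that the semiconcavity inequality holds on every
segment contained in `K`. -/
def LocallySemiconcaveOn {n : ℕ} (A : Set (EuclideanSpace ℝ (Fin n)))
    (u : EuclideanSpace ℝ (Fin n) → ℝ) : Prop :=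
  ∀ K : Set (EuclideanSpace ℝ (Fin n)), K ⊆ A → IsCompact K →
    ∃ C : ℝ, 0 ≤ C ∧ ∀ x y : EuclideanSpace ℝ (Fin n), segment ℝ x y ⊆ K →
      ∀ l : ℝ, l ∈ Set.Icc (0:ℝ) 1 →
        l * u x + (1 - l) * u y - C * (l * (1 - l)) / 2 * ‖x - y‖ ^ 2
          ≤ u (l • x + (1 - l) • y)

theorem semiconcavity_from_concave_composition
    {n : ℕ} (A : Set (EuclideanSpace ℝ (Fin n))) (hA : IsOpen A)
    (u : EuclideanSpace ℝ (Fin n) → ℝ)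
    (hLip : ∀ x ∈ A, ∃ (L : NNReal) (t : Set (EuclideanSpace ℝ (Fin n))),
      t ∈ nhds x ∧ LipschitzOnWith L u t)
    (I : Set ℝ) (hIopen : IsOpen I) (hIinterval : I.OrdConnected)
    (hrange : u '' A ⊆ I)
    (ψ : ℝ → ℝ) (hψ : ContDiffOn ℝ 2 ψ I)
    (hψ' : ∀ t ∈ I, 0 < deriv ψ t)
    (hconc : ∀ S : Set (EuclideanSpace ℝ (Fin n)), S ⊆ A → Convex ℝ S →
      ConcaveOn ℝ S (fun x => ψ (u x))) :
    LocallySemiconcaveOn A u := by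
  intro K hKA hK
  rcases K.eq_empty_or_nonempty with hKe | hne
  · refine ⟨0, le_refl 0, fun x y hseg l hl => absurd (hseg (left_mem_segment ℝ x y)) (by simp [hKe])⟩
  -- u is continuous and Lipschitz on K
  obtain ⟨Lip, hLip0, hLipK⟩ := lipschitz_on_compact hK (fun x hx => hLip x (hKA hx))
  have hcont : ContinuousOn u K := fun x hx =>
    (((hLip x (hKA hx)).choose_spec.choose_spec.2.continuousOn).continuousAt
      (hLip x (hKA hx)).choose_spec.choose_spec.1).continuousWithinAt
  -- compact image
  have himg : IsCompact (u '' K) := hK.image_of_continuousOn hcont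
  have himgne : (u '' K).Nonempty := hne.image u
  set a : ℝ := sInf (u '' K) with ha_def
  set b : ℝ := sSup (u '' K) with hb_def
  have haK : a ∈ u '' K := himg.sInf_mem himgne
  have hbK : b ∈ u '' K := himg.sSup_mem himgne
  have hab : a ≤ b := csInf_le_csSup himgne himg.bddBelow himg.bddAbove
  have huKA : u '' K ⊆ I := fun r hr => hrange (Set.image_mono hKA hr)
  set J : Set ℝ := Icc a b with hJ_def
  have hJI : J ⊆ I := hIinterval.out (huKA haK) (huKA hbK)
  have huKJ : ∀ x ∈ K, u x ∈ J := fun x hx =>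
    ⟨csInf_le himg.bddBelow ⟨x, hx, rfl⟩, le_csSup himg.bddAbove ⟨x, hx, rfl⟩⟩
  have hJne : J.Nonempty := ⟨a, le_refl a, hab⟩
  have hJcomp : IsCompact J := isCompact_Icc
  -- derivatives of ψ
  have hψ1 : ContDiffOn ℝ 1 (deriv ψ) I := hψ.deriv_of_isOpen hIopen (by norm_num)
  have hψ2 : ContDiffOn ℝ 0 (deriv (deriv ψ)) I := hψ1.deriv_of_isOpen hIopen (by norm_num)
  have hdψ : ∀ r ∈ I, HasDerivAt ψ (deriv ψ r) r := fun r hr =>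
    (((hψ.differentiableOn (by norm_num)).differentiableAt (hIopen.mem_nhds hr))).hasDerivAt
  have hdψ' : ∀ r ∈ I, HasDerivAt (deriv ψ) (deriv (deriv ψ) r) r := fun r hr =>
    (((hψ1.differentiableOn (by norm_num)).differentiableAt (hIopen.mem_nhds hr))).hasDerivAt
  -- min of ψ' on J
  obtain ⟨t₀, ht₀, hmin⟩ := hJcomp.exists_isMinOn hJne ((hψ1.continuousOn).mono hJI)
  set m : ℝ := deriv ψ t₀ with hm_def
  have hm : 0 < m := hψ' t₀ (hJI ht₀)
  have hmle : ∀ r ∈ J, m ≤ deriv ψ r := fun r hr => hmin hr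
  -- bound on ψ'' on J
  obtain ⟨M, hM⟩ := hJcomp.exists_bound_of_continuousOn ((hψ2.continuousOn).mono hJI)
  have hM0 : 0 ≤ M := le_trans (norm_nonneg _) (hM a ⟨le_refl a, hab⟩)
  have hMlb : ∀ r ∈ J, -M ≤ deriv (deriv ψ) r := fun r hr => by
    have := hM r hr; rw [Real.norm_eq_abs, abs_le] at this; linarith [this.1]
  -- g := ψ + M/2 * t^2 is convex on J
  have hintJ : interior J ⊆ J := interior_subset
  have hgconv : ConvexOn ℝ J (fun r => ψ r + M / 2 * r ^ 2) := by
    apply convexOn_of_hasDerivWithinAt2_nonneg (f' := fun r => deriv ψ r + M * r)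
      (f'' := fun r => deriv (deriv ψ) r + M) (convex_Icc a b)
    · exact ((hψ.continuousOn).mono hJI).add
        ((continuous_const.mul (continuous_pow 2)).continuousOn)
    · intro r hr
      have h1 : HasDerivAt (fun r : ℝ => ψ r + M / 2 * r ^ 2)
          (deriv ψ r + M / 2 * (2 * r ^ 1)) r :=
        (hdψ r (hJI (hintJ hr))).add ((hasDerivAt_pow 2 r).const_mul (M / 2))
      have : deriv ψ r + M / 2 * (2 * r ^ 1) = deriv ψ r + M * r := by ring
      rw [this] at h1
      exact h1.hasDerivWithinAt
    · intro r hr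
      have h1 : HasDerivAt (fun r : ℝ => deriv ψ r + M * r)
          (deriv (deriv ψ) r + M * 1) r :=
        (hdψ' r (hJI (hintJ hr))).add ((hasDerivAt_id r).const_mul M)
      rw [mul_one] at h1
      exact h1.hasDerivWithinAt
    · intro r hr
      have := hMlb r (hintJ hr); linarith
  -- φ := ψ - m * t is monotone on J
  have hφmono : MonotoneOn (fun r => ψ r - m * r) J := by
    apply monotoneOn_of_hasDerivWithinAt_nonneg (f' := fun r => deriv ψ r - m) (convex_Icc a b)
    · exact ((hψ.continuousOn).mono hJI).sub (continuous_const.mul continuous_id).continuousOn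
    · intro r hr
      have h1 : HasDerivAt (fun r : ℝ => ψ r - m * r) (deriv ψ r - m * 1) r :=
        (hdψ r (hJI (hintJ hr))).sub ((hasDerivAt_id r).const_mul m)
      rw [mul_one] at h1
      exact h1.hasDerivWithinAt
    · intro r hr
      have := hmle r (hintJ hr); linarith
  -- the constant
  refine ⟨M * Lip ^ 2 / m, by positivity, ?_⟩
  intro x y hseg l hl
  have hl0 : (0:ℝ) ≤ l := hl.1
  have hl1 : l ≤ 1 := hl.2
  have hl1' : (0:ℝ) ≤ 1 - l := by linarith
  have hll : (0:ℝ) ≤ l * (1 - l) := mul_nonneg hl0 hl1'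
  have hxK : x ∈ K := hseg (left_mem_segment ℝ x y)
  have hyK : y ∈ K := hseg (right_mem_segment ℝ x y)
  have hzseg : l • x + (1 - l) • y ∈ segment ℝ x y := ⟨l, 1 - l, hl0, hl1', by ring, rfl⟩
  have hzK : l • x + (1 - l) • y ∈ K := hseg hzseg
  set p : ℝ := u x with hp_def
  set q : ℝ := u y with hq_def
  set tv : ℝ := u (l • x + (1 - l) • y) with htv_def
  have hpJ : p ∈ J := huKJ x hxK
  have hqJ : q ∈ J := huKJ y hyK
  have htJ : tv ∈ J := huKJ _ hzK
  have hsJ : l * p + (1 - l) * q ∈ J := by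
    have := (convex_Icc a b) hpJ hqJ hl0 hl1' (by ring)
    simpa [smul_eq_mul, hJ_def] using this
  -- concavity of ψ ∘ u on the segment
  have hconcseg := (hconc (segment ℝ x y) (hseg.trans hKA) (convex_segment x y)).2
    (left_mem_segment ℝ x y) (right_mem_segment ℝ x y) hl0 hl1' (by ring)
  have h1 : l * ψ p + (1 - l) * ψ q ≤ ψ tv := by
    simpa [smul_eq_mul] using hconcseg
  -- semiconcavity of ψ on J
  have h2' := hgconv.2 hpJ hqJ hl0 hl1' (by ring)
  simp only [smul_eq_mul] at h2'
  have h2 : ψ (l * p + (1 - l) * q) ≤ l * ψ p + (1 - l) * ψ q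
      + M / 2 * (l * (1 - l)) * (p - q) ^ 2 := by nlinarith [h2']
  -- Lipschitz bound
  have hpq : |p - q| ≤ Lip * ‖x - y‖ := hLipK x hxK y hyK
  have hpq2 : (p - q) ^ 2 ≤ Lip ^ 2 * ‖x - y‖ ^ 2 := by
    have h := abs_nonneg (p - q)
    nlinarith [sq_abs (p - q)]
  have hnn : (0:ℝ) ≤ ‖x - y‖ ^ 2 := by positivity
  -- conclude
  by_cases hts : l * p + (1 - l) * q ≤ tv
  · have h0 : 0 ≤ M * Lip ^ 2 / m * (l * (1 - l)) / 2 * ‖x - y‖ ^ 2 := by positivity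
    linarith
  · push_neg at hts
    have hφ : ψ tv - m * tv ≤ ψ (l * p + (1 - l) * q) - m * (l * p + (1 - l) * q) :=
      hφmono htJ hsJ hts.le
    have key : m * ((l * p + (1 - l) * q) - tv) ≤ M / 2 * (l * (1 - l)) * (p - q) ^ 2 := by
      linarith [hφ, h1, h2]
    have key2 : M / 2 * (l * (1 - l)) * (p - q) ^ 2
        ≤ M / 2 * (l * (1 - l)) * (Lip ^ 2 * ‖x - y‖ ^ 2) := by
      apply mul_le_mul_of_nonneg_left hpq2
      positivity
    have key3 : M / 2 * (l * (1 - l)) * (Lip ^ 2 * ‖x - y‖ ^ 2)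
        = m * (M * Lip ^ 2 / m * (l * (1 - l)) / 2 * ‖x - y‖ ^ 2) := by
      field_simp
    have final : (l * p + (1 - l) * q) - tv
        ≤ M * Lip ^ 2 / m * (l * (1 - l)) / 2 * ‖x - y‖ ^ 2 := by
      have := key.trans (key2.trans_eq key3)
      exact le_of_mul_le_mul_left this hm
    linarith
end

section
/- Let U ⊆ ℝⁿ be an open set and let v : U → ℝ be differentiable with locally Lipschitz gradient. Let a < b be real numbers such that the set K := {x ∈ U : a ≤ v(x) ≤ b} is compact and there exists α > 0 with |∇v(x)| ≥ α for every x ∈ K. Then for every x₀ ∈ K there exist T ∈ [0, (b − a)/α] and a C¹ curve γ : [0, T] → K solving the normalized gradient flow γ'(t) = ∇v(γ(t))/|∇v(γ(t))| with γ(0) = x₀ and v(γ(T)) = b. -/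
open Set Metric


section Aux

variable {E : Type*} [NormedAddCommGroup E] [NormedSpace ℝ E]

lemma norm_normalize_le_one (x : E) : ‖‖x‖⁻¹ • x‖ ≤ 1 := by
  rcases eq_or_ne x 0 with h | h
  · simp [h]
  · rw [norm_smul, Real.norm_eq_abs, abs_of_nonneg (inv_nonneg.2 (norm_nonneg x)),
      inv_mul_cancel₀ (norm_ne_zero_iff.2 h)]

lemma norm_normalize_sub_le {c : ℝ} (hc : 0 < c) (x y : E) (hx : c ≤ ‖x‖) (hy : c ≤ ‖y‖) :
    ‖‖x‖⁻¹ • x - ‖y‖⁻¹ • y‖ ≤ 2 / c * ‖x - y‖ := by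
  have hx0 : (0:ℝ) < ‖x‖ := hc.trans_le hx
  have hy0 : (0:ℝ) < ‖y‖ := hc.trans_le hy
  have key : ‖x‖⁻¹ • x - ‖y‖⁻¹ • y = ‖x‖⁻¹ • (x - y) + (‖x‖⁻¹ - ‖y‖⁻¹) • y := by
    rw [smul_sub, sub_smul]; abel
  rw [key]
  have h1 : ‖‖x‖⁻¹ • (x - y)‖ ≤ c⁻¹ * ‖x - y‖ := by
    rw [norm_smul, Real.norm_eq_abs, abs_of_pos (inv_pos.2 hx0)]
    gcongr
  have habs : |‖y‖ - ‖x‖| ≤ ‖x - y‖ := by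
    rw [abs_sub_comm]
    exact abs_norm_sub_norm_le x y
  have h2 : ‖(‖x‖⁻¹ - ‖y‖⁻¹) • y‖ ≤ c⁻¹ * ‖x - y‖ := by
    rw [norm_smul, Real.norm_eq_abs]
    have e : ‖x‖⁻¹ - ‖y‖⁻¹ = (‖y‖ - ‖x‖) / (‖x‖ * ‖y‖) := by
      field_simp
    rw [e, abs_div, abs_of_pos (mul_pos hx0 hy0)]
    have : |‖y‖ - ‖x‖| / (‖x‖ * ‖y‖) * ‖y‖ = |‖y‖ - ‖x‖| / ‖x‖ := by
      field_simp
    rw [this]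
    calc |‖y‖ - ‖x‖| / ‖x‖ ≤ ‖x - y‖ / ‖x‖ := by gcongr
      _ ≤ ‖x - y‖ / c := by gcongr
      _ = c⁻¹ * ‖x - y‖ := by rw [div_eq_inv_mul]
  calc ‖‖x‖⁻¹ • (x - y) + (‖x‖⁻¹ - ‖y‖⁻¹) • y‖
      ≤ ‖‖x‖⁻¹ • (x - y)‖ + ‖(‖x‖⁻¹ - ‖y‖⁻¹) • y‖ := norm_add_le _ _
    _ ≤ c⁻¹ * ‖x - y‖ + c⁻¹ * ‖x - y‖ := add_le_add h1 h2
    _ = 2 / c * ‖x - y‖ := by rw [div_eq_mul_inv]; ring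

lemma lipschitzOnWith_normalize {g : E → E} {L : NNReal} {s : Set E} {c : ℝ} (hc : 0 < c)
    (hg : LipschitzOnWith L g s) (hlow : ∀ x ∈ s, c ≤ ‖g x‖) :
    ∃ L' : NNReal, LipschitzOnWith L' (fun x => ‖g x‖⁻¹ • g x) s := by
  refine ⟨Real.toNNReal (2 / c) * L, ?_⟩
  rw [lipschitzOnWith_iff_dist_le_mul]
  intro x hx y hy
  have hd := (lipschitzOnWith_iff_dist_le_mul.1 hg) x hx y hy
  simp only [dist_eq_norm] at hd ⊢
  have h2c : (0:ℝ) ≤ 2 / c := by positivity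
  calc ‖‖g x‖⁻¹ • g x - ‖g y‖⁻¹ • g y‖ ≤ 2 / c * ‖g x - g y‖ :=
        norm_normalize_sub_le hc _ _ (hlow x hx) (hlow y hy)
    _ ≤ 2 / c * ((L : ℝ) * ‖x - y‖) := by gcongr
    _ = ((Real.toNNReal (2 / c) * L : NNReal) : ℝ) * ‖x - y‖ := by
        push_cast [Real.coe_toNNReal _ h2c]; ring

end Aux


section Aux2

variable {E : Type*} [NormedAddCommGroup E] [NormedSpace ℝ E]

lemma hasDerivWithinAt_of_nmem_closure {f : ℝ → E} {f' : E} {s : Set ℝ} {x : ℝ}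
    (h : x ∉ closure s) : HasDerivWithinAt f f' s x :=
  HasFDerivWithinAt.of_notMem_closure h

lemma concat_hasDerivWithinAt {F : E → E} {γ δ : ℝ → E} {T T' : ℝ} (h0T : 0 ≤ T) (hTT' : T < T')
    (hm : γ T = δ T)
    (hγ : ∀ t ∈ Icc 0 T, HasDerivWithinAt γ (F (γ t)) (Icc 0 T) t)
    (hδ : ∀ t ∈ Icc T T', HasDerivWithinAt δ (F (δ t)) (Icc T T') t) :
    ∀ t ∈ Icc 0 T', HasDerivWithinAt (fun u => if u ≤ T then γ u else δ u)
      (F (if t ≤ T then γ t else δ t)) (Icc 0 T') t := by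
  set η := fun u => if u ≤ T then γ u else δ u with hηdef
  have hηγ : ∀ u ∈ Icc 0 T, η u = γ u := fun u hu => if_pos hu.2
  have hηδ : ∀ u ∈ Icc T T', η u = δ u := by
    intro u hu
    rcases eq_or_lt_of_le hu.1 with h | h
    · simp only [η, ← h, if_pos le_rfl, hm]
    · exact if_neg (not_le.2 h)
  intro t ht
  have d1 : HasDerivWithinAt η (F (η t)) (Icc 0 T) t := by
    by_cases h : t ≤ T
    · have htT : t ∈ Icc 0 T := ⟨ht.1, h⟩
      have := (hγ t htT).congr hηγ (hηγ t htT)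
      rwa [← hηγ t htT] at this
    · exact hasDerivWithinAt_of_nmem_closure (by
        rw [closure_Icc]
        exact fun hc => h hc.2)
  have d2 : HasDerivWithinAt η (F (η t)) (Icc T T') t := by
    by_cases h : T ≤ t
    · have htT : t ∈ Icc T T' := ⟨h, ht.2⟩
      have := (hδ t htT).congr hηδ (hηδ t htT)
      rwa [← hηδ t htT] at this
    · exact hasDerivWithinAt_of_nmem_closure (by
        rw [closure_Icc]
        exact fun hc => h hc.1)
  have := d1.union d2
  rwa [Icc_union_Icc_eq_Icc h0T hTT'.le] at this

lemma extend_hasDerivAt {F : E → E} {γ : ℝ → E} {T : ℝ} (h0T : 0 ≤ T)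
    (hγ : ∀ t ∈ Icc 0 T, HasDerivWithinAt γ (F (γ t)) (Icc 0 T) t) :
    ∃ η : ℝ → E, (∀ t ∈ Icc 0 T, η t = γ t) ∧ ∀ t ∈ Icc 0 T, HasDerivAt η (F (η t)) t := by
  classical
  set η := fun t : ℝ => if t < 0 then γ 0 + t • F (γ 0)
    else if t ≤ T then γ t else γ T + (t - T) • F (γ T) with hηdef
  have hηγ : ∀ t ∈ Icc 0 T, η t = γ t := by
    intro t ht
    simp only [η, if_neg (not_lt.2 ht.1), if_pos ht.2]
  refine ⟨η, hηγ, ?_⟩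
  intro t ht
  -- left part : within Iic t
  have hleft : HasDerivWithinAt η (F (η t)) (Iic t) t := by
    rcases eq_or_lt_of_le ht.1 with h0 | h0
    · -- t = 0
      subst h0
      have hlin : HasDerivAt (fun u : ℝ => γ 0 + u • F (γ 0)) (F (γ 0)) 0 := by
        simpa using ((hasDerivAt_id (0:ℝ)).smul_const (F (γ 0))).const_add (γ 0)
      have heq : ∀ u ∈ Iic (0:ℝ), η u = γ 0 + u • F (γ 0) := by
        intro u hu
        rcases lt_or_ge u 0 with h | h
        · simp only [η, if_pos h]
        · have : u = 0 := le_antisymm (mem_Iic.1 hu) h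
          simp [η, this, h0T]
      have h0' : η 0 = γ 0 + (0:ℝ) • F (γ 0) := heq 0 (mem_Iic.2 le_rfl)
      rw [hηγ 0 ht]
      exact hlin.hasDerivWithinAt.congr heq h0'
    · -- 0 < t : Iic t = Iic 0 ∪ Icc 0 t
      have p1 : HasDerivWithinAt η (F (η t)) (Iic 0) t :=
        hasDerivWithinAt_of_nmem_closure (by rw [closure_Iic]; exact not_le.2 h0)
      have p2 : HasDerivWithinAt η (F (η t)) (Icc 0 t) t := by
        have hsub : Icc 0 t ⊆ Icc 0 T := Icc_subset_Icc le_rfl ht.2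
        have := ((hγ t ht).mono hsub).congr (fun u hu => hηγ u (hsub hu)) (hηγ t ht)
        rwa [← hηγ t ht] at this
      have := p1.union p2
      rwa [Iic_union_Icc_eq_Iic h0.le] at this
  have hright : HasDerivWithinAt η (F (η t)) (Ici t) t := by
    rcases eq_or_lt_of_le ht.2 with hT | hT
    · -- t = T
      subst hT
      have hlin : HasDerivAt (fun u : ℝ => γ t + (u - t) • F (γ t)) (F (γ t)) t := by
        simpa using (((hasDerivAt_id t).sub_const t).smul_const (F (γ t))).const_add (γ t)
      have heq : ∀ u ∈ Ici t, η u = γ t + (u - t) • F (γ t) := by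
        intro u hu
        rcases le_or_gt u t with h | h
        · have : u = t := le_antisymm h (mem_Ici.1 hu)
          simp [η, this, h0T, if_neg (not_lt.2 h0T)]
        · simp only [η, if_neg (not_lt.2 (h0T.trans h.le)), if_neg (not_le.2 h)]
      have h0' : η t = γ t + (t - t) • F (γ t) := heq t (mem_Ici.2 le_rfl)
      rw [hηγ t ht]
      exact hlin.hasDerivWithinAt.congr heq h0'
    · -- t < T : Ici t = Icc t T ∪ Ici T
      have p1 : HasDerivWithinAt η (F (η t)) (Icc t T) t := by
        have hsub : Icc t T ⊆ Icc 0 T := Icc_subset_Icc ht.1 le_rfl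
        have := ((hγ t ht).mono hsub).congr (fun u hu => hηγ u (hsub hu)) (hηγ t ht)
        rwa [← hηγ t ht] at this
      have p2 : HasDerivWithinAt η (F (η t)) (Ici T) t :=
        hasDerivWithinAt_of_nmem_closure (by rw [closure_Ici]; exact not_le.2 hT)
      have := p1.union p2
      rwa [Icc_union_Ici_eq_Ici ht.2] at this
  have := hleft.union hright
  rw [Iic_union_Ici] at this
  exact hasDerivWithinAt_univ.1 this

lemma aux_growth {h : ℝ → ℝ} {c : ℝ → ℝ} {s₁ s₂ C : ℝ}
    (hd : ∀ t ∈ Icc s₁ s₂, HasDerivWithinAt h (c t) (Icc s₁ s₂) t)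
    (hc : ∀ t ∈ Icc s₁ s₂, C ≤ c t) :
    ∀ x ∈ Icc s₁ s₂, ∀ y ∈ Icc s₁ s₂, x ≤ y → C * (y - x) ≤ h y - h x := by
  have hcont : ContinuousOn h (Icc s₁ s₂) := fun t ht => (hd t ht).continuousWithinAt
  refine (convex_Icc s₁ s₂).mul_sub_le_image_sub_of_le_deriv hcont ?_ ?_
  · intro t ht
    rw [interior_Icc] at ht
    exact ((hd t (Ioo_subset_Icc_self ht)).hasDerivAt
      (Icc_mem_nhds ht.1 ht.2)).differentiableAt.differentiableWithinAt
  · intro t ht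
    rw [interior_Icc] at ht
    rw [((hd t (Ioo_subset_Icc_self ht)).hasDerivAt (Icc_mem_nhds ht.1 ht.2)).deriv]
    exact hc t (Ioo_subset_Icc_self ht)

lemma ode_step [CompleteSpace E] {F : E → E} (hFnorm : ∀ x, ‖F x‖ ≤ 1) {y : E} {R : ℝ}
    (hR : 0 ≤ R) {L : NNReal} (hlip : LipschitzOnWith L F (closedBall y R)) (t₀ : ℝ) :
    ∃ δ : ℝ → E, δ t₀ = y ∧ (∀ t ∈ Icc t₀ (t₀ + R), δ t ∈ closedBall y R) ∧
      ∀ t ∈ Icc t₀ (t₀ + R), HasDerivWithinAt δ (F (δ t)) (Icc t₀ (t₀ + R)) t := by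
  have hpl : IsPicardLindelof (fun _ : ℝ => F) (tmin := t₀) (tmax := t₀ + R)
      ⟨t₀, le_rfl, by linarith⟩ y ⟨R, hR⟩ 0 1 L :=
    { lipschitzOnWith := fun t _ => hlip
      continuousOn := fun x _ => continuousOn_const
      norm_le := fun t _ x _ => by simpa using hFnorm x
      mul_max_le := by simp [hR]; exact le_rfl }
  obtain ⟨f, hf0', hf⟩ := hpl.exists_eq_forall_mem_Icc_hasDerivWithinAt₀
  have hf0 : f t₀ = y := hf0'
  refine ⟨f, hf0, ?_, hf⟩
  have hbd := norm_image_sub_le_of_norm_deriv_le_segment' hf (fun x _ => hFnorm (f x))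
  intro t ht
  have := hbd t ht
  rw [hf0] at this
  rw [mem_closedBall, dist_eq_norm]
  calc ‖f t - y‖ ≤ 1 * (t - t₀) := this
    _ ≤ R := by rw [one_mul]; linarith [ht.2]

end Aux2


lemma hasDerivWithinAt_v_comp {E : Type*} [NormedAddCommGroup E] [InnerProductSpace ℝ E]
    [CompleteSpace E] {v : E → ℝ} {γ : ℝ → E} {s : Set ℝ} {t : ℝ}
    (hv : DifferentiableAt ℝ v (γ t)) (hne : gradient v (γ t) ≠ 0)
    (hγ : HasDerivWithinAt γ (‖gradient v (γ t)‖⁻¹ • gradient v (γ t)) s t) :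
    HasDerivWithinAt (fun u => v (γ u)) ‖gradient v (γ t)‖ s t := by
  have h1 : HasGradientAt v (gradient v (γ t)) (γ t) := hv.hasGradientAt
  have h2 : HasFDerivAt v (InnerProductSpace.toDual ℝ E (gradient v (γ t))) (γ t) :=
    hasGradientAt_iff_hasFDerivAt.1 h1
  have h3 := h2.comp_hasDerivWithinAt t hγ
  have hval : (InnerProductSpace.toDual ℝ E (gradient v (γ t)))
      (‖gradient v (γ t)‖⁻¹ • gradient v (γ t)) = ‖gradient v (γ t)‖ := by
    rw [InnerProductSpace.toDual_apply_apply, real_inner_smul_right,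
      real_inner_self_eq_norm_mul_norm]
    have h0 : ‖gradient v (γ t)‖ ≠ 0 := norm_ne_zero_iff.2 hne
    field_simp
  rw [hval] at h3
  exact h3

theorem normalized_gradient_flow_reaches_level
    {n : ℕ} (U : Set (EuclideanSpace ℝ (Fin n))) (hU : IsOpen U)
    (v : EuclideanSpace ℝ (Fin n) → ℝ)
    (hdiff : ∀ x ∈ U, DifferentiableAt ℝ v x)
    (hgradLip : ∀ x ∈ U, ∃ (L : NNReal) (r : ℝ), 0 < r ∧ Metric.ball x r ⊆ U ∧
      LipschitzOnWith L (fun y => gradient v y) (Metric.ball x r))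
    (a b : ℝ) (hab : a < b)
    (hKcompact : IsCompact {x ∈ U | a ≤ v x ∧ v x ≤ b})
    (α : ℝ) (hα : 0 < α)
    (hgrad : ∀ x ∈ {x ∈ U | a ≤ v x ∧ v x ≤ b}, α ≤ ‖gradient v x‖) :
    ∀ x₀ ∈ {x ∈ U | a ≤ v x ∧ v x ≤ b},
      ∃ T : ℝ, T ∈ Set.Icc 0 ((b - a) / α) ∧
        ∃ γ : ℝ → EuclideanSpace ℝ (Fin n),
          γ 0 = x₀ ∧
          (∀ t ∈ Set.Icc 0 T, γ t ∈ {x ∈ U | a ≤ v x ∧ v x ≤ b}) ∧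
          (∀ t ∈ Set.Icc 0 T,
            HasDerivAt γ (‖gradient v (γ t)‖⁻¹ • gradient v (γ t)) t) ∧
          v (γ T) = b := by
  classical
  intro x₀ hx₀
  set K := {x ∈ U | a ≤ v x ∧ v x ≤ b} with hKdef
  have hFnorm : ∀ x : EuclideanSpace ℝ (Fin n), ‖‖gradient v x‖⁻¹ • gradient v x‖ ≤ 1 := fun x =>
    norm_normalize_le_one _
  -- per point data
  have key : ∀ x ∈ K, ∃ (r' : ℝ) (L : NNReal), 0 < r' ∧ ball x (2*r') ⊆ U ∧
      (∀ z ∈ ball x (2*r'), α/2 ≤ ‖gradient v z‖) ∧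
      LipschitzOnWith L (gradient v) (ball x (2*r')) := by
    intro x hx
    obtain ⟨L, r, hr, hrU, hLip⟩ := hgradLip x hx.1
    have hL1 : (0:ℝ) < (L:ℝ) + 1 := by positivity
    refine ⟨min (r/2) (α/(4*((L:ℝ)+1))), L, lt_min (by positivity) (by positivity), ?_, ?_, ?_⟩
    · refine (ball_subset_ball ?_).trans hrU
      have := min_le_left (r/2) (α/(4*((L:ℝ)+1)))
      linarith
    · intro z hz
      have hsub : ball x (2 * min (r/2) (α/(4*((L:ℝ)+1)))) ⊆ ball x r := by
        refine ball_subset_ball ?_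
        have := min_le_left (r/2) (α/(4*((L:ℝ)+1)))
        linarith
      have hzr : z ∈ ball x r := hsub hz
      have hxr : x ∈ ball x r := mem_ball_self hr
      have hd := (lipschitzOnWith_iff_dist_le_mul.1 hLip) z hzr x hxr
      have hzx : dist z x < 2 * min (r/2) (α/(4*((L:ℝ)+1))) := mem_ball.1 hz
      have hminle : min (r/2) (α/(4*((L:ℝ)+1))) ≤ α/(4*((L:ℝ)+1)) := min_le_right _ _
      have hgz : ‖gradient v x‖ - dist (gradient v z) (gradient v x) ≤ ‖gradient v z‖ := by
        rw [dist_eq_norm]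
        have := norm_sub_norm_le (gradient v z) (gradient v x)
        have h2 := abs_norm_sub_norm_le (gradient v z) (gradient v x)
        rw [abs_sub_le_iff] at h2
        linarith [h2.2]
      have hkey : (L:ℝ) * dist z x ≤ α/2 := by
        have h1 : dist z x ≤ 2 * (α/(4*((L:ℝ)+1))) := by linarith
        have h2 : (L:ℝ) * dist z x ≤ (L:ℝ) * (2 * (α/(4*((L:ℝ)+1)))) :=
          mul_le_mul_of_nonneg_left h1 L.coe_nonneg
        have h3 : (L:ℝ) * (2 * (α/(4*((L:ℝ)+1)))) ≤ α/2 := by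
          rw [show (L:ℝ) * (2 * (α/(4*((L:ℝ)+1)))) = ((L:ℝ)*α) / (2*((L:ℝ)+1)) by
            field_simp; ring]
          rw [div_le_div_iff₀ (by positivity) (by norm_num : (0:ℝ) < 2)]
          nlinarith [hα, L.coe_nonneg]
        linarith
      have hax : α ≤ ‖gradient v x‖ := hgrad x hx
      linarith
    · exact hLip.mono (by
        refine ball_subset_ball ?_
        have := min_le_left (r/2) (α/(4*((L:ℝ)+1)))
        linarith)
  choose r' L' hr' hU' hlow hLip' using key
  -- finite subcover
  obtain ⟨t, ht⟩ := hKcompact.elim_nhds_subcover'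
    (fun x hx => ball x (r' x hx)) (fun x hx => ball_mem_nhds _ (hr' x hx))
  have hne : t.Nonempty := by
    obtain ⟨i, hi, _⟩ := mem_iUnion₂.1 (ht hx₀)
    exact ⟨i, hi⟩
  set ρ := t.inf' hne (fun i => r' i.1 i.2) with hρdef
  have hρpos : 0 < ρ := by
    rw [hρdef, Finset.lt_inf'_iff]
    exact fun i _ => hr' i.1 i.2
  have huniv : ∀ y ∈ K, (∀ z ∈ closedBall y ρ, z ∈ U ∧ α/2 ≤ ‖gradient v z‖) ∧
      ∃ L'' : NNReal, LipschitzOnWith L''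
        (fun x => ‖gradient v x‖⁻¹ • gradient v x) (closedBall y ρ) := by
    intro y hy
    obtain ⟨i, hi, hyi⟩ := mem_iUnion₂.1 (ht hy)
    have hρle : ρ ≤ r' i.1 i.2 := Finset.inf'_le _ hi
    have hsub : closedBall y ρ ⊆ ball i.1 (2 * r' i.1 i.2) := by
      intro z hz
      rw [mem_ball]
      calc dist z i.1 ≤ dist z y + dist y i.1 := dist_triangle _ _ _
        _ < ρ + r' i.1 i.2 := add_lt_add_of_le_of_lt (mem_closedBall.1 hz) (mem_ball.1 hyi)
        _ ≤ 2 * r' i.1 i.2 := by linarith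
    refine ⟨fun z hz => ⟨hU' i.1 i.2 (hsub hz), hlow i.1 i.2 z (hsub hz)⟩, ?_⟩
    exact lipschitzOnWith_normalize (by positivity : (0:ℝ) < α/2)
      ((hLip' i.1 i.2).mono hsub) (fun z hz => hlow i.1 i.2 z (hsub hz))
  -- growth along a solution staying in K
  have growth : ∀ (γ : ℝ → EuclideanSpace ℝ (Fin n)) (T : ℝ), 0 ≤ T →
      (∀ s ∈ Icc 0 T, γ s ∈ K ∧ HasDerivWithinAt γ
        (‖gradient v (γ s)‖⁻¹ • gradient v (γ s)) (Icc 0 T) s) →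
      α * T ≤ v (γ T) - v (γ 0) := by
    intro γ T hT hprop
    have hd : ∀ s ∈ Icc 0 T, HasDerivWithinAt (fun u => v (γ u))
        ‖gradient v (γ s)‖ (Icc 0 T) s := by
      intro s hs
      have hKs := (hprop s hs).1
      refine hasDerivWithinAt_v_comp (hdiff _ hKs.1) ?_ (hprop s hs).2
      intro h0
      have := hgrad _ hKs
      rw [h0, norm_zero] at this
      linarith
    have := aux_growth hd (fun s hs => hgrad _ (hprop s hs).1) 0 ⟨le_rfl, hT⟩ T ⟨hT, le_rfl⟩ hT
    simpa using this
  -- from a solution reaching b, build the final answer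
  have mkdone : ∀ (T : ℝ) (γ : ℝ → EuclideanSpace ℝ (Fin n)), 0 ≤ T → γ 0 = x₀ →
      (∀ s ∈ Icc 0 T, γ s ∈ K ∧ HasDerivWithinAt γ
        (‖gradient v (γ s)‖⁻¹ • gradient v (γ s)) (Icc 0 T) s) →
      v (γ T) = b →
      ∃ T' : ℝ, T' ∈ Set.Icc 0 ((b - a) / α) ∧
        ∃ η : ℝ → EuclideanSpace ℝ (Fin n),
          η 0 = x₀ ∧
          (∀ s ∈ Set.Icc 0 T', η s ∈ K) ∧
          (∀ s ∈ Set.Icc 0 T',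
            HasDerivAt η (‖gradient v (η s)‖⁻¹ • gradient v (η s)) s) ∧
          v (η T') = b := by
    intro T γ hT h0 hprop hvb
    have hTb : T ≤ (b - a)/α := by
      have hg := growth γ T hT hprop
      have h1 : a ≤ v (γ 0) := by rw [h0]; exact hx₀.2.1
      rw [le_div_iff₀ hα]
      rw [hvb] at hg
      nlinarith [mul_comm α T]
    obtain ⟨η, hηeq, hηderiv⟩ :=
      extend_hasDerivAt (F := fun x => ‖gradient v x‖⁻¹ • gradient v x) hT
        (fun s hs => (hprop s hs).2)
    refine ⟨T, ⟨hT, hTb⟩, η, ?_, ?_, ?_, ?_⟩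
    · rw [hηeq 0 ⟨le_rfl, hT⟩, h0]
    · intro s hs; rw [hηeq s hs]; exact (hprop s hs).1
    · exact hηderiv
    · rw [hηeq T ⟨hT, le_rfl⟩]; exact hvb
  by_cases hb0 : v x₀ = b
  · -- immediate: T = 0 with the straight line through x₀
    refine mkdone 0 (fun s => x₀ + s • (‖gradient v x₀‖⁻¹ • gradient v x₀)) le_rfl
      (by simp) ?_ (by simpa using hb0)
    intro s hs
    rw [mem_Icc] at hs
    have hs0 : s = 0 := le_antisymm hs.2 hs.1
    subst hs0
    constructor
    · simpa using hx₀
    · have hlin : HasDerivAt (fun u : ℝ => x₀ + u • (‖gradient v x₀‖⁻¹ • gradient v x₀))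
          (‖gradient v x₀‖⁻¹ • gradient v x₀) 0 := by
        simpa using ((hasDerivAt_id (0:ℝ)).smul_const
          (‖gradient v x₀‖⁻¹ • gradient v x₀)).const_add x₀
      have h00 : (fun u : ℝ => x₀ + u • (‖gradient v x₀‖⁻¹ • gradient v x₀)) 0 = x₀ := by simp
      rw [zero_smul, add_zero]
      exact hlin.hasDerivWithinAt
  · have hvx₀b : v x₀ < b := lt_of_le_of_ne hx₀.2.2 hb0
    by_contra hgoal
    -- the one-step extension
    have hstep : ∀ T : ℝ, 0 ≤ T →
        (∃ γ : ℝ → EuclideanSpace ℝ (Fin n), γ 0 = x₀ ∧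
          (∀ s ∈ Icc 0 T, γ s ∈ K ∧ HasDerivWithinAt γ
            (‖gradient v (γ s)‖⁻¹ • gradient v (γ s)) (Icc 0 T) s) ∧
          v (γ T) < b) →
        (∃ γ : ℝ → EuclideanSpace ℝ (Fin n), γ 0 = x₀ ∧
          (∀ s ∈ Icc 0 (T + ρ), γ s ∈ K ∧ HasDerivWithinAt γ
            (‖gradient v (γ s)‖⁻¹ • gradient v (γ s)) (Icc 0 (T + ρ)) s) ∧
          v (γ (T + ρ)) < b) := by
      intro T hT ⟨γ, hγ0, hγprop, hγb⟩
      have hTT' : T < T + ρ := by linarith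
      have hyK : γ T ∈ K := (hγprop T ⟨hT, le_rfl⟩).1
      obtain ⟨hball, L'', hL''⟩ := huniv (γ T) hyK
      obtain ⟨δ, hδ0, hδball, hδderiv⟩ := ode_step hFnorm hρpos.le hL'' T
      have hδU : ∀ s ∈ Icc T (T + ρ), δ s ∈ U := fun s hs => (hball _ (hδball s hs)).1
      have hδlow : ∀ s ∈ Icc T (T + ρ), α/2 ≤ ‖gradient v (δ s)‖ :=
        fun s hs => (hball _ (hδball s hs)).2
      have hvd : ∀ s ∈ Icc T (T + ρ), HasDerivWithinAt (fun u => v (δ u))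
          ‖gradient v (δ s)‖ (Icc T (T + ρ)) s := by
        intro s hs
        refine hasDerivWithinAt_v_comp (hdiff _ (hδU s hs)) ?_ (hδderiv s hs)
        intro h0
        have := hδlow s hs
        rw [h0, norm_zero] at this
        linarith
      have hmono := aux_growth hvd hδlow
      have hvmono : ∀ x ∈ Icc T (T + ρ), ∀ y ∈ Icc T (T + ρ), x ≤ y →
          v (δ x) ≤ v (δ y) := by
        intro x hx y hy hxy
        have h1 := hmono x hx y hy hxy
        nlinarith
      have hδG : ∀ s ∈ Icc T (T + ρ), a ≤ v (δ s) := by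
        intro s hs
        have h1 : v (δ T) = v (γ T) := by rw [hδ0]
        have h2 := hvmono T ⟨le_rfl, hTT'.le⟩ s hs hs.1
        have ha' : a ≤ v (γ T) := hyK.2.1
        linarith
      have hconcat := concat_hasDerivWithinAt
        (F := fun x => ‖gradient v x‖⁻¹ • gradient v x) hT hTT' (by rw [hδ0])
        (fun u hu => (hγprop u hu).2) hδderiv
      by_cases hbig : b ≤ v (δ (T + ρ))
      · exfalso
        have hcont : ContinuousOn (fun u => v (δ u)) (Icc T (T + ρ)) :=
          fun u hu => (hvd u hu).continuousWithinAt
        have hbmem : b ∈ Icc (v (δ T)) (v (δ (T + ρ))) := ⟨by rw [hδ0]; exact hγb.le, hbig⟩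
        obtain ⟨s, hs, hvs₀⟩ := intermediate_value_Icc hTT'.le hcont hbmem
        have hvs : v (δ s) = b := hvs₀
        have hTs : T < s := by
          rcases eq_or_lt_of_le hs.1 with h | h
          · exfalso
            rw [← h, hδ0] at hvs
            exact absurd hvs (ne_of_lt hγb)
          · exact h
        have hηprop : ∀ u ∈ Icc 0 s, (fun w => if w ≤ T then γ w else δ w) u ∈ K ∧
            HasDerivWithinAt (fun w => if w ≤ T then γ w else δ w)
              (‖gradient v ((fun w => if w ≤ T then γ w else δ w) u)‖⁻¹ •
                gradient v ((fun w => if w ≤ T then γ w else δ w) u)) (Icc 0 s) u := by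
          intro u hu
          have huT' : u ∈ Icc 0 (T + ρ) := ⟨hu.1, hu.2.trans hs.2⟩
          constructor
          · by_cases hc : u ≤ T
            · have heq : (if u ≤ T then γ u else δ u) = γ u := if_pos hc
              simp only [heq]
              exact (hγprop u ⟨hu.1, hc⟩).1
            · have heq : (if u ≤ T then γ u else δ u) = δ u := if_neg hc
              simp only [heq]
              have huIcc : u ∈ Icc T (T + ρ) := ⟨(not_le.1 hc).le, huT'.2⟩
              refine ⟨hδU u huIcc, hδG u huIcc, ?_⟩
              have h2 := hvmono u huIcc s ⟨hTs.le, hs.2⟩ hu.2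
              linarith
          · exact (hconcat u huT').mono (Icc_subset_Icc le_rfl hs.2)
        have hηs : v ((fun w => if w ≤ T then γ w else δ w) s) = b := by
          simp only [if_neg (not_le.2 hTs)]
          exact hvs
        have hη0 : (fun w => if w ≤ T then γ w else δ w) 0 = x₀ := by
          simp only [if_pos hT]
          exact hγ0
        exact hgoal (mkdone s _ (hT.trans hTs.le) hη0 hηprop hηs)
      · push_neg at hbig
        refine ⟨fun w => if w ≤ T then γ w else δ w, ?_, ?_, ?_⟩
        · simp only [if_pos hT]; exact hγ0
        · intro u hu
          constructor
          · by_cases hc : u ≤ T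
            · have heq : (if u ≤ T then γ u else δ u) = γ u := if_pos hc
              simp only [heq]
              exact (hγprop u ⟨hu.1, hc⟩).1
            · have heq : (if u ≤ T then γ u else δ u) = δ u := if_neg hc
              simp only [heq]
              have huIcc : u ∈ Icc T (T + ρ) := ⟨(not_le.1 hc).le, hu.2⟩
              refine ⟨hδU u huIcc, hδG u huIcc, ?_⟩
              have h2 := hvmono u huIcc (T + ρ) ⟨hTT'.le, le_rfl⟩ hu.2
              linarith
          · exact hconcat u hu
        · simp only [if_neg (not_le.2 hTT')]
          linarith
    -- iterate
    have hP : ∀ m : ℕ, ∃ γ : ℝ → EuclideanSpace ℝ (Fin n), γ 0 = x₀ ∧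
        (∀ s ∈ Icc 0 ((m:ℝ)*ρ), γ s ∈ K ∧ HasDerivWithinAt γ
          (‖gradient v (γ s)‖⁻¹ • gradient v (γ s)) (Icc 0 ((m:ℝ)*ρ)) s) ∧
        v (γ ((m:ℝ)*ρ)) < b := by
      intro m
      induction m with
      | zero =>
        have h00 : ((0:ℕ):ℝ)*ρ = 0 := by simp
        rw [h00]
        refine ⟨fun s => x₀ + s • (‖gradient v x₀‖⁻¹ • gradient v x₀), by simp, ?_, by simpa using hvx₀b⟩
        intro s hs
        rw [mem_Icc] at hs
        have hs0 : s = 0 := le_antisymm hs.2 hs.1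
        subst hs0
        constructor
        · simpa using hx₀
        · have hlin : HasDerivAt (fun u : ℝ => x₀ + u • (‖gradient v x₀‖⁻¹ • gradient v x₀))
              (‖gradient v x₀‖⁻¹ • gradient v x₀) 0 := by
            simpa using ((hasDerivAt_id (0:ℝ)).smul_const
              (‖gradient v x₀‖⁻¹ • gradient v x₀)).const_add x₀
          have h00' : (fun u : ℝ => x₀ + u • (‖gradient v x₀‖⁻¹ • gradient v x₀)) 0 = x₀ := by
            simp
          rw [h00']
          exact hlin.hasDerivWithinAt
      | succ m ih =>
        have hcast : ((m+1:ℕ):ℝ)*ρ = (m:ℝ)*ρ + ρ := by push_cast; ring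
        rw [hcast]
        exact hstep ((m:ℝ)*ρ) (by positivity) ih
    -- contradiction for large m
    obtain ⟨γ, hγ0, hγprop, hγb⟩ := hP (Nat.ceil ((b-a)/(α*ρ)) + 1)
    set m : ℕ := Nat.ceil ((b-a)/(α*ρ)) + 1 with hmdef
    have hg := growth γ ((m:ℝ)*ρ) (by positivity) hγprop
    have h1 : a ≤ v (γ 0) := by rw [hγ0]; exact hx₀.2.1
    have h2 : α * ((m:ℝ)*ρ) < b - a := by linarith
    have h3 : (b-a)/(α*ρ) ≤ ((Nat.ceil ((b-a)/(α*ρ)) : ℕ) : ℝ) := Nat.le_ceil _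
    have h4 : ((Nat.ceil ((b-a)/(α*ρ)) : ℕ) : ℝ) ≤ (m:ℝ) := by
      rw [hmdef]; push_cast; linarith
    have h5 : b - a ≤ (m:ℝ) * (α*ρ) := by
      have hαρ : 0 < α*ρ := by positivity
      calc b - a = ((b-a)/(α*ρ)) * (α*ρ) := by field_simp
        _ ≤ (m:ℝ) * (α*ρ) := by
            apply mul_le_mul_of_nonneg_right _ hαρ.le
            linarith
    nlinarith
end

section
/- Let Ω ⊆ ℝⁿ be an open bounded convex set and let d(x) := dist(x, ∂Ω) denote the distance from the boundary. Let z ∈ Ω be a point with d(z) = max_{closure(Ω)} d, and let y ∈ ∂Ω satisfy |z − y| = d(z). Let δ > 0 and let u : closure(Ω) → ℝ be continuously differentiable on the set {x ∈ closure(Ω) : d(x) < δ}. Assume that u(x) ≤ d(x) for every x ∈ Ω and that u(x) = d(x) for every x on the open segment from y to z. Then |∇u(y)| = 1. -/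
open Set Metric Filter Topology RealInnerProductSpace

set_option maxHeartbeats 2000000 in
theorem gradient_norm_one_at_foot_point
    {n : ℕ} (Ω : Set (EuclideanSpace ℝ (Fin n)))
    (hΩopen : IsOpen Ω) (hΩbdd : Bornology.IsBounded Ω) (hΩconv : Convex ℝ Ω)
    (z : EuclideanSpace ℝ (Fin n)) (hz : z ∈ Ω)
    (hzmax : ∀ x ∈ closure Ω, Metric.infDist x Ωᶜ ≤ Metric.infDist z Ωᶜ)
    (y : EuclideanSpace ℝ (Fin n)) (hy : y ∈ frontier Ω)
    (hyz : ‖z - y‖ = Metric.infDist z Ωᶜ)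
    (δ : ℝ) (hδ : 0 < δ)
    (u : EuclideanSpace ℝ (Fin n) → ℝ)
    (huC1 : ContDiffOn ℝ 1 u {x ∈ closure Ω | Metric.infDist x Ωᶜ < δ})
    (hle : ∀ x ∈ Ω, u x ≤ Metric.infDist x Ωᶜ)
    (heq : ∀ x ∈ openSegment ℝ y z, u x = Metric.infDist x Ωᶜ) :
    ‖fderivWithin ℝ u {x ∈ closure Ω | Metric.infDist x Ωᶜ < δ} y‖ = 1 := by
  set S : Set (EuclideanSpace ℝ (Fin n)) :=
    {x ∈ closure Ω | Metric.infDist x Ωᶜ < δ} with hSdef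
  set c : ℝ := Metric.infDist z Ωᶜ with hcdef
  set v : EuclideanSpace ℝ (Fin n) := z - y with hvdef
  have hyC : y ∈ closure Ω := frontier_subset_closure hy
  have hyΩc : y ∈ Ωᶜ := by
    rw [mem_compl_iff]
    exact (hΩopen.frontier_eq ▸ hy).2
  have hzy : z ≠ y := fun hzy => hyΩc (hzy ▸ hz)
  have hcpos : 0 < c := by
    rw [← hyz, hvdef]
    exact norm_sub_pos_iff.mpr hzy
  have hdy0 : Metric.infDist y Ωᶜ = 0 := infDist_zero_of_mem hyΩc
  have hyS : y ∈ S := ⟨hyC, by rw [hdy0]; exact hδ⟩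
  -- distance bounds along the segment
  have hup : ∀ s : ℝ, 0 ≤ s → Metric.infDist (y + s • v) Ωᶜ ≤ s * c := by
    intro s hs
    calc Metric.infDist (y + s • v) Ωᶜ ≤ dist (y + s • v) y :=
          infDist_le_dist_of_mem hyΩc
      _ = s * c := by
          rw [dist_eq_norm, add_sub_cancel_left, norm_smul, Real.norm_eq_abs, abs_of_nonneg hs, hyz]
  have hlow : ∀ s : ℝ, 0 ≤ s → s ≤ 1 → s * c ≤ Metric.infDist (y + s • v) Ωᶜ := by
    intro s h0 h1
    have h₁ : c ≤ Metric.infDist (y + s • v) Ωᶜ + dist z (y + s • v) :=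
      Metric.infDist_le_infDist_add_dist
    have h₂ : dist z (y + s • v) = (1 - s) * c := by
      rw [dist_eq_norm]
      have hz' : z - (y + s • v) = (1 - s) • v := by rw [hvdef]; module
      rw [hz', norm_smul, Real.norm_eq_abs, abs_of_nonneg (by linarith), hyz]
    linarith
  have hsegmem : ∀ s : ℝ, s ∈ Ioo (0:ℝ) 1 → y + s • v ∈ openSegment ℝ y z := by
    intro s hs
    rw [openSegment_eq_image]
    exact ⟨s, hs, by rw [hvdef]; module⟩
  have hmemΩ : ∀ s : ℝ, s ∈ Ioo (0:ℝ) 1 → y + s • v ∈ Ω := by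
    intro s hs
    by_contra hx
    have h0 : Metric.infDist (y + s • v) Ωᶜ = 0 := infDist_zero_of_mem hx
    have h1 := hlow s hs.1.le hs.2.le
    nlinarith [hs.1, hcpos]
  have hd_seg : ∀ s : ℝ, s ∈ Ioo (0:ℝ) 1 → Metric.infDist (y + s • v) Ωᶜ = s * c :=
    fun s hs => le_antisymm (hup s hs.1.le) (hlow s hs.1.le hs.2.le)
  have hu_seg : ∀ s : ℝ, s ∈ Ioo (0:ℝ) 1 → u (y + s • v) = s * c := fun s hs => by
    rw [heq _ (hsegmem s hs), hd_seg s hs]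
  -- a convenient interval
  set τ : ℝ := min (1/2) (δ / (2 * c)) with hτdef
  have hτpos : 0 < τ := lt_min (by norm_num) (div_pos hδ (by linarith))
  have hτlt1 : τ < 1 := lt_of_le_of_lt (min_le_left _ _) (by norm_num)
  have hφS : ∀ t ∈ Ioo (0:ℝ) τ, y + t • v ∈ S := by
    intro t ht
    have ht1 : t < 1 := lt_trans ht.2 hτlt1
    refine ⟨subset_closure (hmemΩ t ⟨ht.1, ht1⟩), ?_⟩
    have htc : t * c < δ := by
      have h2 : t < δ / (2 * c) := lt_of_lt_of_le ht.2 (min_le_right _ _)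
      have h3 : t * c < (δ / (2 * c)) * c := mul_lt_mul_of_pos_right h2 hcpos
      have h4 : (δ / (2 * c)) * c = δ / 2 := by field_simp
      linarith
    have := hup t ht.1.le
    linarith
  have hNB : ∀ a : ℝ, 0 < a → (𝓝[Ioo (0:ℝ) a] (0:ℝ)).NeBot := by
    intro a ha
    apply mem_closure_iff_nhdsWithin_neBot.mp
    rw [closure_Ioo ha.ne]
    exact ⟨le_rfl, ha.le⟩
  -- u y = 0
  have hu0 : u y = 0 := by
    haveI := hNB τ hτpos
    have hcw : ContinuousWithinAt u S y := huC1.continuousOn y hyS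
    have hφcont : Continuous fun t : ℝ => y + t • v :=
      continuous_const.add (continuous_id.smul continuous_const)
    have hφt : Tendsto (fun t : ℝ => y + t • v) (𝓝[Ioo (0:ℝ) τ] 0) (𝓝[S] y) := by
      apply tendsto_nhdsWithin_of_tendsto_nhds_of_eventually_within
      · exact (hφcont.tendsto' 0 y (by simp)).mono_left nhdsWithin_le_nhds
      · filter_upwards [self_mem_nhdsWithin] with t ht using hφS t ht
    have h1 : Tendsto (fun t : ℝ => u (y + t • v)) (𝓝[Ioo (0:ℝ) τ] 0) (𝓝 (u y)) :=
      hcw.tendsto.comp hφt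
    have h2 : Tendsto (fun t : ℝ => u (y + t • v)) (𝓝[Ioo (0:ℝ) τ] 0) (𝓝 0) := by
      apply Tendsto.congr'
        (f₁ := fun t : ℝ => t * c)
      · filter_upwards [self_mem_nhdsWithin] with t ht
        exact (hu_seg t ⟨ht.1, lt_trans ht.2 hτlt1⟩).symm
      · exact (((continuous_id.mul continuous_const).tendsto' 0 0 (by simp)).mono_left
          nhdsWithin_le_nhds)
    exact tendsto_nhds_unique h1 h2
  set L := fderivWithin ℝ u S y with hLdef
  have hLy : HasFDerivWithinAt u L S y :=
    ((huC1.differentiableOn one_ne_zero) y hyS).hasFDerivWithinAt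
  -- derivative along lines
  have hderiv_line : ∀ (w : EuclideanSpace ℝ (Fin n)) (a : ℝ), 0 < a →
      (∀ t ∈ Ioo (0:ℝ) a, y + t • w ∈ S) →
      HasDerivWithinAt (fun t : ℝ => u (y + t • w)) (L w) (Ioo 0 a) 0 := by
    intro w a ha hmaps
    have hψ : HasDerivAt (fun t : ℝ => y + t • w) w 0 := by
      simpa using ((hasDerivAt_id (0:ℝ)).smul_const w).const_add y
    have hLy' : HasFDerivWithinAt u L S ((fun t : ℝ => y + t • w) 0) := by
      simpa using hLy
    have := hLy'.comp_hasDerivWithinAt 0 hψ.hasDerivWithinAt hmaps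
    exact this
  -- L v = c
  have hLv : L v = c := by
    have hD := hderiv_line v τ hτpos hφS
    have hD' : HasDerivWithinAt (fun t : ℝ => u (y + t • v)) c (Ioo 0 τ) 0 := by
      apply (hasDerivAt_mul_const c).hasDerivWithinAt.congr
      · intro t ht
        exact hu_seg t ⟨ht.1, lt_trans ht.2 hτlt1⟩
      · simp [hu0]
    have hud : UniqueDiffWithinAt ℝ (Ioo (0:ℝ) τ) 0 :=
      uniqueDiffWithinAt_convex (convex_Ioo 0 τ)
        (by rw [interior_Ioo]; exact nonempty_Ioo.mpr hτpos)
        (by rw [closure_Ioo hτpos.ne]; exact ⟨le_rfl, hτpos.le⟩)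
    exact UniqueDiffWithinAt.eq_deriv _ hud hD hD'
  set v₀ : EuclideanSpace ℝ (Fin n) := c⁻¹ • v with hv₀def
  have hv₀ : ‖v₀‖ = 1 := by
    rw [hv₀def, norm_smul, Real.norm_eq_abs, abs_of_pos (inv_pos.mpr hcpos), hyz,
      inv_mul_cancel₀ hcpos.ne']
  have hLv₀ : L v₀ = 1 := by
    rw [hv₀def, map_smul, hLv, smul_eq_mul, inv_mul_cancel₀ hcpos.ne']
  -- the key inequality
  have hkey : ∀ w : EuclideanSpace ℝ (Fin n), ‖w - v₀‖ < 1 → L w ≤ ‖w‖ := by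
    intro w hw
    have hwpos : 0 < ‖w‖ := by
      have h1 : ‖v₀‖ ≤ ‖v₀ - w‖ + ‖w‖ := by
        simpa using norm_add_le (v₀ - w) w
      have h2 : ‖v₀ - w‖ = ‖w - v₀‖ := norm_sub_rev _ _
      linarith [hv₀]
    set a : ℝ := min c (δ / (‖w‖ + 1)) with hadef
    have hapos : 0 < a := lt_min hcpos (div_pos hδ (by positivity))
    have hψΩ : ∀ t ∈ Ioo (0:ℝ) a, y + t • w ∈ Ω := by
      intro t ht
      by_contra hx
      have hxc : y + t • w ∈ Ωᶜ := hx
      have htc : t < c := lt_of_lt_of_le ht.2 (min_le_left _ _)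
      have hs1 : t / c ∈ Ioo (0:ℝ) 1 := ⟨div_pos ht.1 hcpos, (div_lt_one hcpos).mpr htc⟩
      have hlow' : t ≤ Metric.infDist (y + (t / c) • v) Ωᶜ := by
        have := hlow (t / c) hs1.1.le hs1.2.le
        rwa [div_mul_cancel₀ _ hcpos.ne'] at this
      have hdist : Metric.infDist (y + (t / c) • v) Ωᶜ ≤ dist (y + (t / c) • v) (y + t • w) :=
        infDist_le_dist_of_mem hxc
      have heqv : (t / c) • v = t • v₀ := by
        rw [hv₀def, div_eq_mul_inv, mul_smul]
      have hdist2 : dist (y + (t / c) • v) (y + t • w) = t * ‖w - v₀‖ := by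
        rw [heqv, dist_eq_norm]
        have hexp : y + t • v₀ - (y + t • w) = t • (v₀ - w) := by module
        rw [hexp, norm_smul, Real.norm_eq_abs, abs_of_pos ht.1, norm_sub_rev]
      nlinarith [ht.1]
    have hdub : ∀ t ∈ Ioo (0:ℝ) a, Metric.infDist (y + t • w) Ωᶜ ≤ t * ‖w‖ := by
      intro t ht
      calc Metric.infDist (y + t • w) Ωᶜ ≤ dist (y + t • w) y := infDist_le_dist_of_mem hyΩc
        _ = t * ‖w‖ := by
            rw [dist_eq_norm, add_sub_cancel_left, norm_smul, Real.norm_eq_abs, abs_of_pos ht.1]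
    have hψS : ∀ t ∈ Ioo (0:ℝ) a, y + t • w ∈ S := by
      intro t ht
      refine ⟨subset_closure (hψΩ t ht), ?_⟩
      have h2 : t * ‖w‖ < δ := by
        have h3 : t < δ / (‖w‖ + 1) := lt_of_lt_of_le ht.2 (min_le_right _ _)
        have h4 : t * (‖w‖ + 1) < δ := by
          rw [← lt_div_iff₀ (by positivity)]
          exact h3
        nlinarith [ht.1]
      have := hdub t ht
      linarith
    have hD := hderiv_line w a hapos hψS
    rw [hasDerivWithinAt_iff_tendsto_slope] at hD
    have hIoo : Ioo (0:ℝ) a \ {0} = Ioo 0 a :=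
      diff_singleton_eq_self (fun h => lt_irrefl (0:ℝ) h.1)
    rw [hIoo] at hD
    haveI := hNB a hapos
    refine le_of_tendsto hD ?_
    filter_upwards [self_mem_nhdsWithin] with t ht
    have hub : u (y + t • w) ≤ t * ‖w‖ := le_trans (hle _ (hψΩ t ht)) (hdub t ht)
    have hslope : slope (fun t : ℝ => u (y + t • w)) 0 t = u (y + t • w) / t := by
      rw [slope_def_field]
      simp [hu0]
    rw [hslope]
    rw [div_le_iff₀ ht.1]
    linarith
  -- Riesz representation
  set g := (InnerProductSpace.toDual ℝ (EuclideanSpace ℝ (Fin n))).symm L with hgdef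
  have hg : ∀ x : EuclideanSpace ℝ (Fin n), ⟪g, x⟫ = L x := fun x => InnerProductSpace.toDual_symm_apply
  set h := g - v₀ with hhdef
  have hgv : ⟪g, v₀⟫ = 1 := by rw [hg]; exact hLv₀
  have hv₀h : ⟪v₀, h⟫ = 0 := by
    rw [hhdef, inner_sub_right, real_inner_comm g v₀, hgv,
      real_inner_self_eq_norm_sq, hv₀]
    norm_num
  have hgh : ⟪g, h⟫ = ‖h‖ ^ 2 := by
    have hgvh : g = v₀ + h := by rw [hhdef]; abel
    rw [hgvh, inner_add_left, hv₀h, real_inner_self_eq_norm_sq]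
    ring
  have hh0 : h = 0 := by
    by_contra hne
    have hhpos : 0 < ‖h‖ := norm_pos_iff.mpr hne
    set t : ℝ := 1 / (2 * (‖h‖ + 1)) with htdef
    have htpos : 0 < t := by positivity
    have hthalf : t ≤ 1 / 2 := by
      rw [htdef]
      apply one_div_le_one_div_of_le
      · norm_num
      · nlinarith
    have hth1 : t * ‖h‖ < 1 := by
      rw [htdef]
      rw [div_mul_eq_mul_div, div_lt_one (by positivity)]
      nlinarith
    have hwv : ‖(v₀ + t • h) - v₀‖ < 1 := by
      have : (v₀ + t • h) - v₀ = t • h := by abel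
      rw [this, norm_smul, Real.norm_eq_abs, abs_of_pos htpos]
      exact hth1
    have hLw : L (v₀ + t • h) = 1 + t * ‖h‖ ^ 2 := by
      rw [← hg, inner_add_right, real_inner_smul_right g h t, hgv, hgh]
    have hnw : ‖v₀ + t • h‖ ^ 2 = 1 + t ^ 2 * ‖h‖ ^ 2 := by
      rw [norm_add_sq_real, real_inner_smul_right v₀ h t, hv₀h, hv₀, norm_smul,
        Real.norm_eq_abs, abs_of_pos htpos]
      ring
    have hkey' := hkey (v₀ + t • h) hwv
    rw [hLw] at hkey'
    have hsq : (1 + t * ‖h‖ ^ 2) ^ 2 ≤ ‖v₀ + t • h‖ ^ 2 := by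
      have h0 : (0:ℝ) ≤ 1 + t * ‖h‖ ^ 2 := by positivity
      nlinarith [norm_nonneg (v₀ + t • h)]
    rw [hnw] at hsq
    nlinarith [hhpos, htpos, hthalf, mul_pos htpos (mul_pos hhpos hhpos)]
  have hgv₀ : g = v₀ := by rwa [hhdef, sub_eq_zero] at hh0
  have hnorm : ‖g‖ = ‖L‖ := LinearIsometryEquiv.norm_map _ L
  rw [← hnorm, hgv₀]
  exact hv₀
end

section
/- Let Ω ⊆ ℝⁿ be an open bounded set and let u : closure(Ω) → ℝ be a continuous function with u = 0 on ∂Ω, which is locally semiconcave in Ω and satisfies |∇u(x)| ≥ 1 at almost every point x ∈ Ω (note that u, being locally semiconcave, is locally Lipschitz and hence differentiable almost everywhere in Ω). Then u(x) ≥ dist(x, ∂Ω) for every x ∈ Ω. -/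
open Set Metric MeasureTheory

open Filter Bornology
open scoped RealInnerProductSpace Topology ENNReal

lemma taylor_upper {n : ℕ} {u : EuclideanSpace ℝ (Fin n) → ℝ}
    {K : Set (EuclideanSpace ℝ (Fin n))} {C : ℝ} (hC : 0 ≤ C)
    (hK : ∀ x y : EuclideanSpace ℝ (Fin n), segment ℝ x y ⊆ K →
      ∀ l ∈ Set.Icc (0:ℝ) 1,
      l * u x + (1 - l) * u y - C * (l * (1 - l)) / 2 * ‖x - y‖ ^ 2
        ≤ u (l • x + (1 - l) • y))
    {z v : EuclideanSpace ℝ (Fin n)} (hseg : segment ℝ (z + v) z ⊆ K)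
    (hd : DifferentiableAt ℝ u z) :
    u (z + v) ≤ u z + ⟪gradient u z, v⟫ + C / 2 * ‖v‖ ^ 2 := by
  have hφ : HasDerivAt (fun l : ℝ => z + l • v) v 0 := by
    simpa using ((hasDerivAt_id (0:ℝ)).smul_const v).const_add z
  have hF : HasFDerivAt u ((InnerProductSpace.toDual ℝ _) (gradient u z)) z :=
    hasGradientAt_iff_hasFDerivAt.mp hd.hasGradientAt
  have hF' : HasFDerivAt u ((InnerProductSpace.toDual ℝ _) (gradient u z))
      ((fun l : ℝ => z + l • v) 0) := by simpa using hF
  have hcomp : HasDerivAt (fun l : ℝ => u (z + l • v)) ⟪gradient u z, v⟫ 0 := by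
    have h := hF'.comp_hasDerivAt 0 hφ
    simp only [InnerProductSpace.toDual_apply_apply] at h
    exact h
  have hslope : Tendsto (slope (fun l : ℝ => u (z + l • v)) 0) (𝓝[>] 0)
      (𝓝 ⟪gradient u z, v⟫) :=
    (hasDerivAt_iff_tendsto_slope.mp hcomp).mono_left
      (nhdsWithin_mono 0 (fun l hl => ne_of_gt hl))
  have hev : ∀ᶠ l in 𝓝[>] (0:ℝ),
      u (z + v) - u z - C / 2 * ‖v‖ ^ 2 ≤ slope (fun l : ℝ => u (z + l • v)) 0 l := by
    filter_upwards [Ioc_mem_nhdsGT_of_mem (Set.mem_Ico.mpr ⟨le_refl (0:ℝ), one_pos⟩)] with l hl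
    obtain ⟨hl0, hl1⟩ := hl
    have h1 := hK (z + v) z hseg l ⟨hl0.le, hl1⟩
    have hxy : ‖(z + v) - z‖ = ‖v‖ := by simp
    have harg : l • (z + v) + (1 - l) • z = z + l • v := by module
    rw [harg, hxy] at h1
    have hs : slope (fun l : ℝ => u (z + l • v)) 0 l = (u (z + l • v) - u z) / l := by
      rw [slope_def_field]
      simp
    rw [hs, le_div_iff₀ hl0]
    nlinarith [sq_nonneg ‖v‖, mul_nonneg (mul_nonneg hC (mul_self_nonneg l)) (sq_nonneg ‖v‖)]
  have := ge_of_tendsto hslope hev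
  linarith

lemma concave_of_semiconcave {n : ℕ} {u : EuclideanSpace ℝ (Fin n) → ℝ}
    {y : EuclideanSpace ℝ (Fin n)} {R C : ℝ}
    (hK : ∀ x w : EuclideanSpace ℝ (Fin n), segment ℝ x w ⊆ closedBall y R →
      ∀ l ∈ Set.Icc (0:ℝ) 1,
      l * u x + (1 - l) * u w - C * (l * (1 - l)) / 2 * ‖x - w‖ ^ 2
        ≤ u (l • x + (1 - l) • w)) :
    ConcaveOn ℝ (ball y R) (fun w => u w - C / 2 * ‖w - y‖ ^ 2) := by
  refine ⟨convex_ball y R, ?_⟩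
  intro p hp q hq a b ha hb hab
  have hb' : b = 1 - a := by linarith
  have hseg : segment ℝ p q ⊆ closedBall y R :=
    ((convex_ball y R).segment_subset hp hq).trans ball_subset_closedBall
  have ha1 : a ≤ 1 := by linarith
  have h1 := hK p q hseg a ⟨ha, ha1⟩
  subst hb'
  have hyid : a • p + (1 - a) • q - y = a • (p - y) + (1 - a) • (q - y) := by module
  have hpq : p - q = (p - y) - (q - y) := by abel
  set P := p - y with hP
  set Q := q - y with hQ
  have hid : ‖a • P + (1 - a) • Q‖ ^ 2 = a * ‖P‖ ^ 2 + (1 - a) * ‖Q‖ ^ 2 - a * (1 - a) * ‖P - Q‖ ^ 2 := by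
    have e1 : ‖a • P + (1 - a) • Q‖ ^ 2 = a ^ 2 * ‖P‖ ^ 2 + 2 * (a * (1 - a) * ⟪P, Q⟫) + (1 - a) ^ 2 * ‖Q‖ ^ 2 := by
      rw [norm_add_sq_real, norm_smul, norm_smul, real_inner_smul_left, real_inner_smul_right]
      simp [mul_pow, sq_abs]
      ring
    have e2 : ‖P - Q‖ ^ 2 = ‖P‖ ^ 2 - 2 * ⟪P, Q⟫ + ‖Q‖ ^ 2 := norm_sub_sq_real P Q
    rw [e1, e2]
    ring
  calc a • (u p - C / 2 * ‖p - y‖ ^ 2) + (1 - a) • (u q - C / 2 * ‖q - y‖ ^ 2)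
      = a * u p + (1 - a) * u q - C / 2 * (a * ‖P‖ ^ 2 + (1 - a) * ‖Q‖ ^ 2) := by
        simp only [smul_eq_mul, hP, hQ]; ring
    _ ≤ u (a • p + (1 - a) • q) - C / 2 * ‖a • p + (1 - a) • q - y‖ ^ 2 := by
        rw [hyid, hid]
        have h2 : ‖p - q‖ ^ 2 = ‖P - Q‖ ^ 2 := by rw [hpq]
        rw [h2] at h1
        nlinarith [h1]

lemma key_descent {n : ℕ} {Ω : Set (EuclideanSpace ℝ (Fin n))}
    (hΩopen : IsOpen Ω) {u : EuclideanSpace ℝ (Fin n) → ℝ}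
    (hu : ContinuousOn u (closure Ω))
    (hsc : LocallySemiconcaveOn Ω u)
    (hgrad : ∀ᵐ x ∂(volume : Measure (EuclideanSpace ℝ (Fin n))),
      x ∈ Ω → DifferentiableAt ℝ u x → 1 ≤ ‖gradient u x‖)
    {y : EuclideanSpace ℝ (Fin n)} (hy : y ∈ Ω) {ε : ℝ} (hε0 : 0 < ε) (hε1 : ε < 1) :
    ∃ w ∈ Ω, w ≠ y ∧ u w + (1 - ε) * dist w y < u y := by
  -- a ball around y inside Ω
  obtain ⟨r, hr0, hrsub⟩ := Metric.isOpen_iff.mp hΩopen y hy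
  set δ : ℝ := r / 4 with hδdef
  have hδ0 : 0 < δ := by positivity
  have hKsub : closedBall y (2 * δ) ⊆ Ω := by
    refine (closedBall_subset_ball ?_).trans hrsub
    rw [hδdef]; linarith
  obtain ⟨C, hC0, hCineq⟩ := hsc (closedBall y (2 * δ)) hKsub (isCompact_closedBall y _)
  -- the quadratic shift is concave, hence u is Lipschitz on a smaller ball
  set φ : EuclideanSpace ℝ (Fin n) → ℝ := fun w => u w - C / 2 * ‖w - y‖ ^ 2 with hφdef
  have hφconc : ConcaveOn ℝ (ball y (2 * δ)) φ := concave_of_semiconcave hCineq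
  have hφcont : ContinuousOn φ (closedBall y (2 * δ)) := by
    apply ContinuousOn.sub
    · exact hu.mono (hKsub.trans subset_closure)
    · fun_prop
  have hφbdd : Bornology.IsBounded (φ '' ball y (2 * δ)) := by
    apply Bornology.IsBounded.subset
    · exact ((isCompact_closedBall y (2 * δ)).image_of_continuousOn hφcont).isBounded
    · exact fun _ ⟨a, ha, e⟩ => ⟨a, ball_subset_closedBall ha, e⟩
  obtain ⟨L, hL⟩ := hφconc.exists_lipschitzOnWith_of_isBounded
    (show δ < 2 * δ by linarith) hφbdd
  have hrad : ∀ᵐ z ∂(volume : Measure (EuclideanSpace ℝ (Fin n))),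
      z ∈ ball y δ → DifferentiableWithinAt ℝ φ (ball y δ) z :=
    hL.ae_differentiableWithinAt_of_mem
  -- the step size
  set s : ℝ := min δ (ε / (C + 1)) with hsdef
  have hs0 : 0 < s := lt_min hδ0 (by positivity)
  have hsδ : s ≤ δ := min_le_left _ _
  have hCs : C * s ≤ ε := by
    have h1 : s ≤ ε / (C + 1) := min_le_right _ _
    have h2 : C * s ≤ C * (ε / (C + 1)) := by nlinarith
    have h3 : C * (ε / (C + 1)) ≤ ε := by
      rw [mul_div_assoc'] 
      rw [div_le_iff₀ (by positivity)]
      nlinarith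
    linarith
  -- continuity of u at y
  have hcy : ContinuousAt u y :=
    hu.continuousAt (Filter.mem_of_superset (hΩopen.mem_nhds hy) subset_closure)
  obtain ⟨η₀, hη₀0, hη₀⟩ := Metric.continuousAt_iff.mp hcy (ε * s / 8) (by positivity)
  set η : ℝ := min (min η₀ δ) (ε * s / 8) with hηdef
  have hη0 : 0 < η := lt_min (lt_min hη₀0 hδ0) (by positivity)
  have hηδ : η ≤ δ := (min_le_left _ _).trans (min_le_right _ _)
  have hηε : η ≤ ε * s / 8 := min_le_right _ _
  -- find a good point z near y
  have hball : (0:ℝ≥0∞) < volume (ball y η) := measure_ball_pos volume y hη0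
  obtain ⟨z, hzball, hz1, hz2⟩ : ∃ z, z ∈ ball y η ∧
      (z ∈ Ω → DifferentiableAt ℝ u z → 1 ≤ ‖gradient u z‖) ∧
      (z ∈ ball y δ → DifferentiableWithinAt ℝ φ (ball y δ) z) := by
    by_contra hcon
    have hae := hgrad.and hrad
    rw [MeasureTheory.ae_iff] at hae
    have hsub : ball y η ⊆ {z | ¬((z ∈ Ω → DifferentiableAt ℝ u z → 1 ≤ ‖gradient u z‖) ∧
        (z ∈ ball y δ → DifferentiableWithinAt ℝ φ (ball y δ) z))} := by
      intro z hz
      simp only [Set.mem_setOf_eq]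
      intro hand
      exact hcon ⟨z, hz, hand.1, hand.2⟩
    have hmono := measure_mono (μ := (volume : Measure (EuclideanSpace ℝ (Fin n)))) hsub
    rw [hae] at hmono
    exact absurd (le_antisymm hmono (by simp)) hball.ne'
  have hzδ : z ∈ ball y δ := ball_subset_ball hηδ hzball
  have hzΩ : z ∈ Ω := hrsub (ball_subset_ball (by rw [hδdef]; linarith) hzδ)
  -- u is differentiable at z
  have hq : DifferentiableAt ℝ (fun w : EuclideanSpace ℝ (Fin n) => C / 2 * ‖w - y‖ ^ 2) z := by
    have heq : (fun w : EuclideanSpace ℝ (Fin n) => C / 2 * ‖w - y‖ ^ 2)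
        = fun w : EuclideanSpace ℝ (Fin n) => C / 2 * ⟪w - y, w - y⟫ := by
      funext w; rw [real_inner_self_eq_norm_sq]
    rw [heq]
    exact ((differentiableAt_id.sub_const y).inner ℝ (differentiableAt_id.sub_const y)).const_mul _
  have hφz : DifferentiableAt ℝ φ z :=
    (hz2 hzδ).differentiableAt ((isOpen_ball).mem_nhds hzδ)
  have hdz : DifferentiableAt ℝ u z := by
    have : u = fun w => φ w + C / 2 * ‖w - y‖ ^ 2 := by
      funext w; simp [hφdef]
    rw [this]
    exact hφz.add hq
  have hg1 : 1 ≤ ‖gradient u z‖ := hz1 hzΩ hdz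
  set g : EuclideanSpace ℝ (Fin n) := gradient u z with hgdef
  have hgne : g ≠ 0 := by
    intro h
    rw [h] at hg1
    simp at hg1
    linarith
  have hgnorm : 0 < ‖g‖ := norm_pos_iff.mpr hgne
  set v : EuclideanSpace ℝ (Fin n) := -(s / ‖g‖) • g with hvdef
  have hvnorm : ‖v‖ = s := by
    rw [hvdef, norm_smul]
    rw [norm_neg, Real.norm_eq_abs, abs_of_pos (by positivity)]
    field_simp
  have hinner : ⟪g, v⟫ = -(s * ‖g‖) := by
    rw [hvdef, real_inner_smul_right, real_inner_self_eq_norm_sq]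
    field_simp
  set w : EuclideanSpace ℝ (Fin n) := z + v with hwdef
  -- segment from w to z is in the closed ball
  have hzK : z ∈ closedBall y (2 * δ) := by
    apply ball_subset_closedBall
    exact ball_subset_ball (by linarith) hzδ
  have hwK : w ∈ closedBall y (2 * δ) := by
    rw [mem_closedBall]
    calc dist w y ≤ dist w z + dist z y := dist_triangle w z y
      _ ≤ s + δ := by
          apply add_le_add
          · rw [hwdef, dist_eq_norm]; simp [hvnorm]
          · exact le_of_lt (mem_ball.mp hzδ)
      _ ≤ 2 * δ := by linarith
  have hseg : segment ℝ (z + v) z ⊆ closedBall y (2 * δ) := by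
    rw [← hwdef]
    exact (convex_closedBall y (2 * δ)).segment_subset hwK hzK
  have htay := taylor_upper hC0 hCineq hseg hdz
  rw [hinner, hvnorm] at htay
  have huw : u w ≤ u z - s + C / 2 * s ^ 2 := by
    rw [hwdef]
    nlinarith [htay, hg1, hs0.le]
  have huz : u z < u y + ε * s / 8 := by
    have := hη₀ (show dist z y < η₀ by
      calc dist z y < η := mem_ball.mp hzball
        _ ≤ η₀ := (min_le_left _ _).trans (min_le_left _ _))
    rw [Real.dist_eq] at this
    have := abs_lt.mp this
    linarith [this.2]
  have hdwy : dist w y ≤ s + η := by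
    calc dist w y ≤ dist w z + dist z y := dist_triangle w z y
      _ ≤ s + η := by
          apply add_le_add
          · rw [hwdef, dist_eq_norm]; simp [hvnorm]
          · exact le_of_lt (mem_ball.mp hzball)
  clear_value δ φ s η g v w
  have hA : C / 2 * s ^ 2 ≤ ε * s / 2 := by
    have h := mul_le_mul_of_nonneg_right hCs hs0.le
    rw [sq]; linarith
  have hεs : ε * s < s := by
    have h := mul_lt_mul_of_pos_right hε1 hs0
    linarith
  refine ⟨w, hKsub hwK, ?_, ?_⟩
  · intro hwy
    rw [hwy] at huw
    linarith
  · have h5 : (1 - ε) * dist w y ≤ (1 - ε) * (s + η) := by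
      apply mul_le_mul_of_nonneg_left hdwy (by linarith)
    have hB : (1 - ε) * (s + η) ≤ s + η - ε * s := by
      have h2 : 0 ≤ ε * η := mul_nonneg hε0.le hη0.le
      linarith [h2]
    linarith

theorem eikonal_supersolution_comparison
    {n : ℕ} (Ω : Set (EuclideanSpace ℝ (Fin n)))
    (hΩopen : IsOpen Ω) (hΩbdd : Bornology.IsBounded Ω)
    (u : EuclideanSpace ℝ (Fin n) → ℝ)
    (hu : ContinuousOn u (closure Ω))
    (hu0 : ∀ x ∈ frontier Ω, u x = 0)
    (hsc : LocallySemiconcaveOn Ω u)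
    (hgrad : ∀ᵐ x ∂(volume : Measure (EuclideanSpace ℝ (Fin n))),
      x ∈ Ω → DifferentiableAt ℝ u x → 1 ≤ ‖gradient u x‖) :
    ∀ x ∈ Ω, Metric.infDist x (frontier Ω) ≤ u x := by
  intro x hx
  have hclos : IsCompact (closure Ω) := hΩbdd.isCompact_closure
  have hxcl : x ∈ closure Ω := subset_closure hx
  obtain ⟨xmin, hxmincl, hmin⟩ := hclos.exists_isMinOn ⟨x, hxcl⟩ hu
  have hB : ∀ z ∈ closure Ω, u xmin ≤ u z := fun z hz => hmin hz
  have main : ∀ ε : ℝ, 0 < ε → ε < 1 → (1 - ε) * infDist x (frontier Ω) ≤ u x := by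
    intro ε hε0 hε1
    set ρ : ℝ := 1 - ε with hρdef
    have hρ0 : 0 < ρ := by rw [hρdef]; linarith
    -- the subtype of admissible points and the descent relation
    let P : EuclideanSpace ℝ (Fin n) → Prop :=
      fun z => z ∈ closure Ω ∧ u z + ρ * dist z x ≤ u x
    let r : {z // P z} → {z // P z} → Prop :=
      fun a b => u b.1 + ρ * dist b.1 a.1 ≤ u a.1
    have htrans : ∀ {a b c : {z // P z}}, r a b → r b c → r a c := by
      intro a b c hab hbc
      have htri : dist c.1 a.1 ≤ dist c.1 b.1 + dist b.1 a.1 := dist_triangle _ _ _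
      have h2 := mul_le_mul_of_nonneg_left htri hρ0.le
      have hab' : u b.1 + ρ * dist b.1 a.1 ≤ u a.1 := hab
      have hbc' : u c.1 + ρ * dist c.1 b.1 ≤ u b.1 := hbc
      show u c.1 + ρ * dist c.1 a.1 ≤ u a.1
      linarith
    have hchain : ∀ c, IsChain r c → ∃ ub, ∀ a ∈ c, r a ub := by
      intro ch hch
      rcases Set.eq_empty_or_nonempty ch with hemp | ⟨a₀, ha₀⟩
      · refine ⟨⟨x, hxcl, by simp⟩, ?_⟩
        intro a ha
        rw [hemp] at ha
        exact absurd ha (Set.notMem_empty a)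
      · -- nonempty chain: take an infimizing sequence
        set A : Set ℝ := (fun a : {z // P z} => u a.1) '' ch with hAdef
        have hAne : A.Nonempty := ⟨u a₀.1, a₀, ha₀, rfl⟩
        have hAbdd : BddBelow A := by
          refine ⟨u xmin, ?_⟩
          rintro t ⟨a, ha, rfl⟩
          exact hB a.1 a.2.1
        set m : ℝ := sInf A with hmdef
        have hseq : ∀ k : ℕ, ∃ a ∈ ch, u a.1 < m + 1 / (k + 1) := by
          intro k
          obtain ⟨t, ht, hlt⟩ := Real.lt_sInf_add_pos hAne
            (show (0:ℝ) < 1 / (k + 1) by positivity)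
          obtain ⟨a, ha, rfl⟩ := ht
          exact ⟨a, ha, hlt⟩
        choose zs hzs hzslt using hseq
        have hmle : ∀ a ∈ ch, m ≤ u a.1 := fun a ha => csInf_le hAbdd ⟨a, ha, rfl⟩
        clear_value m A ρ
        -- pairwise distance estimates
        have hdist : ∀ j k : ℕ, dist (zs j).1 (zs k).1 ≤ (1 / (j + 1)) / ρ ∨
            dist (zs j).1 (zs k).1 ≤ (1 / (k + 1)) / ρ := by
          intro j k
          rcases eq_or_ne (zs j) (zs k) with heq | hne
          · left
            rw [heq, dist_self]
            positivity
          · rcases hch (hzs j) (hzs k) hne with h | h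
            · -- r (zs j) (zs k)
              left
              have h1 := hmle (zs k) (hzs k)
              have h2 := hzslt j
              have h' : u (zs k).1 + ρ * dist (zs k).1 (zs j).1 ≤ u (zs j).1 := h
              have h3 : ρ * dist (zs k).1 (zs j).1 ≤ 1 / (j + 1) := by
                linarith only [h', h1, h2]
              rw [dist_comm, le_div_iff₀ hρ0]
              linarith
            · right
              have h1 := hmle (zs j) (hzs j)
              have h2 := hzslt k
              have h' : u (zs j).1 + ρ * dist (zs j).1 (zs k).1 ≤ u (zs k).1 := h
              have h3 : ρ * dist (zs j).1 (zs k).1 ≤ 1 / (k + 1) := by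
                linarith only [h', h1, h2]
              rw [le_div_iff₀ hρ0]
              linarith
        have hcauchy : CauchySeq (fun k => (zs k).1) := by
          apply cauchySeq_of_le_tendsto_0 (fun N : ℕ => (1 / (N + 1)) / ρ)
          · intro p q N hp hq
            have h1 : (1 : ℝ) / (p + 1) ≤ 1 / (N + 1) := by
              apply one_div_le_one_div_of_le (by positivity)
              have : (N:ℝ) ≤ p := Nat.cast_le.mpr hp
              linarith
            have h2 : (1 : ℝ) / (q + 1) ≤ 1 / (N + 1) := by
              apply one_div_le_one_div_of_le (by positivity)
              have : (N:ℝ) ≤ q := Nat.cast_le.mpr hq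
              linarith
            rcases hdist p q with h | h
            · refine h.trans ?_
              gcongr
            · refine h.trans ?_
              gcongr
          · have h1 : Tendsto (fun N : ℕ => (1:ℝ) / (N + 1)) atTop (nhds 0) :=
              tendsto_one_div_add_atTop_nhds_zero_nat
            simpa using h1.div_const ρ
        obtain ⟨zlim, hzlim⟩ := cauchySeq_tendsto_of_complete hcauchy
        have hzlimcl : zlim ∈ closure Ω :=
          isClosed_closure.mem_of_tendsto hzlim (Filter.Eventually.of_forall fun k => (zs k).2.1)
        have hulim : Tendsto (fun k => u (zs k).1) atTop (nhds (u zlim)) := by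
          have hwithin : Tendsto (fun k => (zs k).1) atTop (nhdsWithin zlim (closure Ω)) :=
            tendsto_nhdsWithin_of_tendsto_nhds_of_eventually_within _ hzlim
              (Filter.Eventually.of_forall fun k => (zs k).2.1)
          exact Filter.Tendsto.comp (hu zlim hzlimcl) hwithin
        -- zlim is a lower bound for the chain
        have hlow : ∀ a ∈ ch, u zlim + ρ * dist zlim a.1 ≤ u a.1 := by
          intro a ha
          have hk : ∀ k : ℕ, u (zs k).1 + ρ * dist (zs k).1 a.1 ≤ u a.1 + 2 / (k + 1) := by
            intro k
            have hkpos : (0:ℝ) < 1 / (k + 1) := by positivity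
            have hdiv : (2:ℝ) / (k + 1) = 2 * (1 / ((k:ℝ) + 1)) := by ring
            rcases eq_or_ne (zs k) a with heq | hne
            · rw [heq, dist_self, mul_zero]
              linarith only [hkpos, hdiv]
            · rcases hch (hzs k) ha hne with h | h
              · -- r (zs k) a : a below zs k
                have hma := hmle a ha
                have h2 := hzslt k
                have h' : u a.1 + ρ * dist a.1 (zs k).1 ≤ u (zs k).1 := h
                have hd : ρ * dist a.1 (zs k).1 ≤ 1 / (k + 1) := by
                  linarith only [h', hma, h2]
                rw [dist_comm]
                linarith only [h', hma, h2, hd, hdiv]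
              · have h' : u (zs k).1 + ρ * dist (zs k).1 a.1 ≤ u a.1 := h
                linarith only [h', hkpos, hdiv]
          have hf : Tendsto (fun k => u (zs k).1 + ρ * dist (zs k).1 a.1) atTop
              (nhds (u zlim + ρ * dist zlim a.1)) := by
            apply hulim.add
            exact (hzlim.dist tendsto_const_nhds).const_mul ρ
          have hg : Tendsto (fun k : ℕ => u a.1 + 2 / (k + 1)) atTop (nhds (u a.1)) := by
            have h1 : Tendsto (fun N : ℕ => (1:ℝ) / (N + 1)) atTop (nhds 0) :=
              tendsto_one_div_add_atTop_nhds_zero_nat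
            have h2 : Tendsto (fun N : ℕ => 2 * ((1:ℝ) / (N + 1))) atTop (nhds 0) := by
              simpa using h1.const_mul 2
            have h3 : Tendsto (fun N : ℕ => u a.1 + 2 * ((1:ℝ) / (N + 1))) atTop
                (nhds (u a.1 + 0)) := tendsto_const_nhds.add h2
            simp only [add_zero] at h3
            convert h3 using 2 with N
            ring
          exact le_of_tendsto_of_tendsto' hf hg hk
        -- zlim is admissible
        have hzlimP : P zlim := by
          refine ⟨hzlimcl, ?_⟩
          have h1 := hlow a₀ ha₀
          have h2 := a₀.2.2
          have htri : dist zlim x ≤ dist zlim a₀.1 + dist a₀.1 x := dist_triangle _ _ _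
          have h3 := mul_le_mul_of_nonneg_left htri hρ0.le
          linarith
        exact ⟨⟨zlim, hzlimP⟩, fun a ha => hlow a ha⟩
    obtain ⟨mz, hmz⟩ := exists_maximal_of_chains_bounded hchain (fun {a b c} => htrans)
    -- the maximal element lies on the frontier
    have hfront : mz.1 ∈ frontier Ω := by
      by_contra hnot
      have hmzΩ : mz.1 ∈ Ω := by
        have h1 : mz.1 ∈ closure Ω \ frontier Ω := ⟨mz.2.1, hnot⟩
        rw [closure_diff_frontier, hΩopen.interior_eq] at h1
        exact h1
      obtain ⟨w, hwΩ, hwne, hwlt⟩ := key_descent hΩopen hu hsc hgrad hmzΩ hε0 hε1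
      rw [← hρdef] at hwlt
      have hwP : P w := by
        refine ⟨subset_closure hwΩ, ?_⟩
        have h2 := mz.2.2
        have htri : dist w x ≤ dist w mz.1 + dist mz.1 x := dist_triangle _ _ _
        have h3 := mul_le_mul_of_nonneg_left htri hρ0.le
        linarith
      have h4 := hmz ⟨w, hwP⟩ hwlt.le
      have h4' : u mz.1 + ρ * dist mz.1 w ≤ u w := h4
      rw [dist_comm] at h4'
      have h5 := mul_nonneg hρ0.le (dist_nonneg (x := w) (y := mz.1))
      linarith only [h4', hwlt, h5]
    have hmz0 : u mz.1 = 0 := hu0 mz.1 hfront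
    have h6 := mz.2.2
    rw [hmz0] at h6
    have h7 : infDist x (frontier Ω) ≤ dist mz.1 x := by
      rw [dist_comm]
      exact infDist_le_dist_of_mem hfront
    have h8 := mul_le_mul_of_nonneg_left h7 hρ0.le
    linarith
  -- conclude by letting ε → 0
  have h0 : 0 ≤ infDist x (frontier Ω) := infDist_nonneg
  by_contra hcon
  push_neg at hcon
  set I : ℝ := infDist x (frontier Ω) with hIdef
  have hux0 : 0 ≤ u x := by
    have := main (1/2) (by norm_num) (by norm_num)
    nlinarith
  have hI0 : 0 < I := lt_of_le_of_lt hux0 hcon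
  have hε0 : 0 < (I - u x) / (2 * I) := by
    apply div_pos (by linarith) (by linarith)
  have hε1 : (I - u x) / (2 * I) < 1 := by
    rw [div_lt_one (by linarith)]
    linarith
  have hm := main _ hε0 hε1
  have heq : (1 - (I - u x) / (2 * I)) * I = (I + u x) / 2 := by
    field_simp
    ring
  rw [heq] at hm
  linarith
end
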